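/- arXiv:2602.10694 — 2 statements merged into one kernel-verified Lean document; each statement's English description precedes it below -/
import Mathlib

section
/- Let f : ℝ → ℂ be n-times differentiable with bounded n-th derivative f^(n). Then the n-th divided difference f^[n] : ℝ^{n+1} → ℂ is bounded, with sup-norm bound ‖f^[n]‖_∞ ≤ ‖f^(n)‖_∞ / n!. -/
open MeasureTheory

/-- The `n`-th order divided difference of `f`, given by the Hermite–Genocchi formula:
`f^[n](λ₀,…,λₙ) = ∫_{1 ≥ t₁ ≥ … ≥ tₙ ≥ 0} f⁽ⁿ⁾(λ₀ + Σᵢ tᵢ (λᵢ - λᵢ₋₁)) dt`. -/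
noncomputable def divDiff (n : ℕ) (f : ℝ → ℂ) (lam : Fin (n + 1) → ℝ) : ℂ :=
  ∫ t in {t : Fin n → ℝ | (∀ i, t i ∈ Set.Icc (0 : ℝ) 1) ∧ ∀ i j : Fin n, i ≤ j → t j ≤ t i},
    iteratedDeriv n f (lam 0 + ∑ i : Fin n, t i * (lam i.succ - lam i.castSucc))


/-- The simplex set, reindexed by a permutation. -/
def permSimplex (n : ℕ) (σ : Equiv.Perm (Fin n)) : Set (Fin n → ℝ) :=
  {t | (∀ i, t i ∈ Set.Icc (0 : ℝ) 1) ∧ ∀ i j : Fin n, i ≤ j → t (σ j) ≤ t (σ i)}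

lemma permSimplex_measurable (n : ℕ) (σ : Equiv.Perm (Fin n)) :
    MeasurableSet (permSimplex n σ) := by
  have heq : permSimplex n σ = (⋂ i, {t : Fin n → ℝ | t i ∈ Set.Icc (0:ℝ) 1}) ∩
      ⋂ i, ⋂ j, ⋂ (_ : i ≤ j), {t : Fin n → ℝ | t (σ j) ≤ t (σ i)} := by
    ext t; simp [permSimplex]
  rw [heq]
  apply MeasurableSet.inter
  · exact MeasurableSet.iInter fun i =>
      (measurableSet_Icc (a := (0:ℝ)) (b := 1)).preimage (measurable_pi_apply i)
  · refine MeasurableSet.iInter fun i => MeasurableSet.iInter fun j =>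
      MeasurableSet.iInter fun _ => ?_
    exact measurableSet_le (measurable_pi_apply _) (measurable_pi_apply _)

lemma permSimplex_preimage (n : ℕ) (σ : Equiv.Perm (Fin n)) :
    permSimplex n σ = (MeasurableEquiv.piCongrLeft (fun _ : Fin n => ℝ) σ.symm) ⁻¹'
      (permSimplex n 1) := by
  ext t
  simp only [Set.mem_preimage, permSimplex, Set.mem_setOf_eq,
    MeasurableEquiv.coe_piCongrLeft]
  have hev : ∀ i, (Equiv.piCongrLeft (fun _ : Fin n => ℝ) σ.symm) t i = t (σ i) := by
    intro i
    simp [Equiv.piCongrLeft_apply_eq_cast]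
  constructor
  · rintro ⟨h1, h2⟩
    refine ⟨fun i => by rw [hev]; exact h1 _, fun i j hij => ?_⟩
    rw [hev, hev]
    simpa using h2 i j hij
  · rintro ⟨h1, h2⟩
    refine ⟨fun i => by simpa [hev] using h1 (σ.symm i), fun i j hij => ?_⟩
    have := h2 i j hij
    rw [hev, hev] at this
    simpa using this

lemma permSimplex_volume (n : ℕ) (σ : Equiv.Perm (Fin n)) :
    volume (permSimplex n σ) = volume (permSimplex n 1) := by
  rw [permSimplex_preimage]
  exact (volume_measurePreserving_piCongrLeft (fun _ : Fin n => ℝ) σ.symm).measure_preimage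
    (permSimplex_measurable n 1).nullMeasurableSet

lemma permSimplex_inter_subset {n : ℕ} {σ τ : Equiv.Perm (Fin n)} (h : σ ≠ τ) :
    permSimplex n σ ∩ permSimplex n τ ⊆ {t | ¬ Function.Injective t} := by
  rintro t ⟨⟨_, h2⟩, ⟨_, h3⟩⟩ hinj
  apply h
  have hanti : ∀ π : Equiv.Perm (Fin n),
      (∀ i j : Fin n, i ≤ j → t (π j) ≤ t (π i)) → StrictAnti (t ∘ π) := by
    intro π hπ
    have : Antitone (t ∘ π) := fun i j hij => hπ i j hij
    exact this.strictAnti_of_injective (hinj.comp π.injective)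
  have hr : Set.range (t ∘ σ) = Set.range (t ∘ τ) := by
    rw [Set.range_comp, Set.range_comp, σ.range_eq_univ, τ.range_eq_univ]
  have := (StrictAnti.range_inj (hanti σ h2) (hanti τ h3)).mp hr
  exact Equiv.ext fun i => hinj (congrFun this i)

lemma noninj_null (n : ℕ) : volume {t : Fin n → ℝ | ¬ Function.Injective t} = 0 := by
  have hsub : {t : Fin n → ℝ | ¬ Function.Injective t} ⊆
      ⋃ (i : Fin n), ⋃ (j : Fin n), ⋃ (_ : i ≠ j), {t : Fin n → ℝ | t i = t j} := by
    intro t ht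
    simp only [Set.mem_setOf_eq, Function.Injective, not_forall] at ht
    obtain ⟨i, j, hij, hne⟩ := ht
    exact Set.mem_iUnion.2 ⟨i, Set.mem_iUnion.2 ⟨j, Set.mem_iUnion.2 ⟨hne, hij⟩⟩⟩
  refine measure_mono_null hsub ?_
  refine (measure_iUnion_null fun i => measure_iUnion_null fun j => measure_iUnion_null
    fun hij => ?_)
  have : {t : Fin n → ℝ | t i = t j} =
      (LinearMap.ker ((LinearMap.proj i : (Fin n → ℝ) →ₗ[ℝ] ℝ) - LinearMap.proj j) : Set _) := by
    ext t
    simp [sub_eq_zero]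
  rw [this]
  apply Measure.addHaar_submodule
  intro htop
  have : (Function.update (0 : Fin n → ℝ) i 1) ∈
      LinearMap.ker ((LinearMap.proj i : (Fin n → ℝ) →ₗ[ℝ] ℝ) - LinearMap.proj j) := by
    rw [htop]; trivial
  simp only [LinearMap.mem_ker, LinearMap.sub_apply, LinearMap.proj_apply] at this
  rw [Function.update_self, Function.update_of_ne (Ne.symm hij)] at this
  simp at this

lemma simplex_volume_le (n : ℕ) :
    volume (permSimplex n 1) ≤ 1 / (n.factorial : ENNReal) := by
  have hdisj : Pairwise (Function.onFun (AEDisjoint volume) fun σ : Equiv.Perm (Fin n) => permSimplex n σ) := by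
    intro σ τ hne
    exact measure_mono_null (permSimplex_inter_subset hne) (noninj_null n)
  have hmeas : ∀ σ : Equiv.Perm (Fin n), NullMeasurableSet (permSimplex n σ) volume :=
    fun σ => (permSimplex_measurable n σ).nullMeasurableSet
  have hsum : ∑' σ : Equiv.Perm (Fin n), volume (permSimplex n σ)
      = volume (⋃ σ : Equiv.Perm (Fin n), permSimplex n σ) :=
    (measure_iUnion₀ hdisj hmeas).symm
  have hUsub : (⋃ σ : Equiv.Perm (Fin n), permSimplex n σ) ⊆
      Set.pi Set.univ (fun _ : Fin n => Set.Icc (0:ℝ) 1) := by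
    rintro t ht
    obtain ⟨σ, hσ⟩ := Set.mem_iUnion.1 ht
    exact fun i _ => hσ.1 i
  have hcube : volume (Set.pi Set.univ (fun _ : Fin n => Set.Icc (0:ℝ) 1)) = 1 := by
    rw [volume_pi_pi]
    simp
  have hle : ∑' σ : Equiv.Perm (Fin n), volume (permSimplex n σ) ≤ 1 := by
    rw [hsum]
    calc volume (⋃ σ : Equiv.Perm (Fin n), permSimplex n σ)
        ≤ volume (Set.pi Set.univ (fun _ : Fin n => Set.Icc (0:ℝ) 1)) := measure_mono hUsub
      _ = 1 := hcube
  have hconst : ∑' σ : Equiv.Perm (Fin n), volume (permSimplex n σ)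
      = (n.factorial : ENNReal) * volume (permSimplex n 1) := by
    have h1 : ∑' σ : Equiv.Perm (Fin n), volume (permSimplex n σ)
        = ∑' _ : Equiv.Perm (Fin n), volume (permSimplex n 1) :=
      tsum_congr fun σ => permSimplex_volume n σ
    rw [h1, tsum_fintype]
    simp [Finset.sum_const, Fintype.card_perm, nsmul_eq_mul]
  rw [hconst] at hle
  rw [ENNReal.le_div_iff_mul_le (by simp [Nat.factorial_ne_zero]) (by simp)]
  rwa [mul_comm]

/-- If `f` is `n`-times differentiable with `‖f⁽ⁿ⁾‖_∞ ≤ C`, then the `n`-th divided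
difference is bounded by `C / n!`. -/
theorem divDiff_bound (n : ℕ) (f : ℝ → ℂ)
    (hdiff : ∀ k < n, Differentiable ℝ (iteratedDeriv k f))
    (C : ℝ) (hC : ∀ x : ℝ, ‖iteratedDeriv n f x‖ ≤ C) :
    ∀ lam : Fin (n + 1) → ℝ, ‖divDiff n f lam‖ ≤ C / n.factorial := by
  intro lam
  have h0 : 0 ≤ C := le_trans (norm_nonneg _) (hC 0)
  have hSeq : {t : Fin n → ℝ | (∀ i, t i ∈ Set.Icc (0 : ℝ) 1) ∧
      ∀ i j : Fin n, i ≤ j → t j ≤ t i} = permSimplex n 1 := by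
    ext t; simp [permSimplex]
  have hfin : volume (permSimplex n 1) < ⊤ :=
    lt_of_le_of_lt (simplex_volume_le n)
      (ENNReal.div_lt_top (by simp) (by simp [Nat.factorial_ne_zero]))
  have hbound := norm_setIntegral_le_of_norm_le_const (μ := volume) hfin
    (f := fun t : Fin n → ℝ =>
      iteratedDeriv n f (lam 0 + ∑ i : Fin n, t i * (lam i.succ - lam i.castSucc)))
    (fun t _ => hC _)
  rw [divDiff, hSeq]
  refine le_trans hbound ?_
  have htr : (volume (permSimplex n 1)).toReal ≤ 1 / n.factorial := by
    have := ENNReal.toReal_mono (by simp [Nat.factorial_ne_zero]) (simplex_volume_le n)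
    simpa [ENNReal.toReal_div] using this
  calc C * (volume (permSimplex n 1)).toReal ≤ C * (1 / n.factorial) := by
        exact mul_le_mul_of_nonneg_left htr h0
    _ = C / n.factorial := by ring
end

section
/- Let p ∈ (1,∞). Consider the commutative measure space (0,1) with Lebesgue measure, let a ≡ 1 (the constant function 1) and let b ∈ L^p(0,1) be a nonnegative function with b² ∉ L^p(0,1) (equivalently b ∉ L^{2p}(0,1)). Define φ'(t) = -b/(2+tb)² ∈ L^p(0,1) for t ≥ 0. Then the map t ↦ φ'(t) is not differentiable at t = 0 in L^p(0,1)-norm; more precisely, (φ'(t)-φ'(0))/t = b²/(2+tb)² + t·b³/(4(2+tb)²) has no limit in L^p(0,1) as t → 0⁺. -/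
open MeasureTheory Filter Topology
open scoped ENNReal

/-- On `L^p(0,1)`, `1 < p < ∞`, with `a ≡ 1` and `b ≥ 0` in `L^p \ L^{2p}` (i.e. `b² ∉ L^p`),
the map `t ↦ φ'(t) = -b/(2+tb)²` is not differentiable at `t = 0` in `L^p`-norm: the difference
quotient `(φ'(t) - φ'(0))/t` has no limit in `L^p(0,1)` as `t → 0⁺`. -/
theorem not_differentiable_Lp_counterexample
    (p : ℝ≥0∞) (hp1 : 1 < p) (hp2 : p ≠ ∞)
    (μ : Measure ℝ) (hμ : μ = volume.restrict (Set.Ioo (0 : ℝ) 1))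
    (b : ℝ → ℝ) (hb_meas : Measurable b) (hb_nonneg : ∀ x, 0 ≤ b x)
    (hb_mem : MemLp b p μ)
    (hb2_not_mem : ¬ MemLp (fun x => (b x) ^ 2) p μ)
    (φ' : ℝ → ℝ → ℝ) (hφ' : ∀ t x, φ' t x = -(b x) / (2 + t * b x) ^ 2) :
    ¬ ∃ g : ℝ → ℝ, MemLp g p μ ∧
      Tendsto (fun t : ℝ => eLpNorm (fun x => (φ' t x - φ' 0 x) / t - g x) p μ)
        (𝓝[>] 0) (𝓝 0) := by
  rintro ⟨g, hg, htend⟩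
  set t : ℕ → ℝ := fun n => 1 / ((n : ℝ) + 1) with ht_def
  have ht_pos : ∀ n, 0 < t n := fun n => by positivity
  have ht_lim : Tendsto t atTop (𝓝 (0 : ℝ)) :=
    tendsto_one_div_add_atTop_nhds_zero_nat
  have ht0 : Tendsto t atTop (𝓝[>] (0 : ℝ)) :=
    tendsto_nhdsWithin_of_tendsto_nhds_of_eventually_within _ ht_lim
      (Eventually.of_forall fun n => ht_pos n)
  set F : ℕ → ℝ → ℝ := fun n x => (φ' (t n) x - φ' 0 x) / t n with hF_def
  have hF_meas : ∀ n, AEStronglyMeasurable (F n) μ := by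
    intro n
    simp only [hF_def, hφ']
    apply Measurable.aestronglyMeasurable
    fun_prop
  have hseq : Tendsto (fun n => eLpNorm (F n - g) p μ) atTop (𝓝 0) :=
    htend.comp ht0
  have hTIM : TendstoInMeasure μ F atTop g :=
    tendstoInMeasure_of_tendsto_eLpNorm (zero_lt_one.trans hp1).ne'
      hF_meas hg.aestronglyMeasurable hseq
  obtain ⟨ns, hns, hae⟩ := hTIM.exists_seq_tendsto_ae
  -- pointwise limit of the difference quotient is b²/4
  have hpt : ∀ x, Tendsto (fun n => F n x) atTop (𝓝 (b x ^ 2 / 4)) := by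
    intro x
    have hcont : ContinuousAt
        (fun s : ℝ => b x ^ 2 * (4 + s * b x) / (4 * (2 + s * b x) ^ 2)) 0 := by
      apply ContinuousAt.div
      · fun_prop
      · fun_prop
      · norm_num
    have hval : (fun s : ℝ => b x ^ 2 * (4 + s * b x) / (4 * (2 + s * b x) ^ 2)) 0
        = b x ^ 2 / 4 := by
      simp; ring
    have hG : Tendsto (fun s : ℝ => b x ^ 2 * (4 + s * b x) / (4 * (2 + s * b x) ^ 2))
        (𝓝 0) (𝓝 (b x ^ 2 / 4)) := hval ▸ hcont.tendsto
    have hcomp := hG.comp ht_lim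
    refine hcomp.congr fun n => ?_
    have h1 : (0 : ℝ) < t n := ht_pos n
    have h2 : (0 : ℝ) < 2 + t n * b x :=
      add_pos_of_pos_of_nonneg two_pos (mul_nonneg h1.le (hb_nonneg x))
    simp only [Function.comp, hF_def, hφ']
    rw [eq_div_iff h1.ne']
    field_simp [(mul_comm (t n) (b x) ▸ h2).ne']
    ring
  have hg_eq : g =ᵐ[μ] fun x => b x ^ 2 / 4 := by
    filter_upwards [hae] with x hx
    exact tendsto_nhds_unique hx ((hpt x).comp hns.tendsto_atTop)
  have hmem : MemLp (fun x => b x ^ 2 / 4) p μ := hg.ae_eq hg_eq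
  have hmem2 : MemLp (fun x => (b x) ^ 2) p μ := by
    have := hmem.const_mul (4 : ℝ)
    refine this.ae_eq (Eventually.of_forall fun x => ?_)
    ring
  exact hb2_not_mem hmem2
end
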